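/- arXiv:1901.07780 — 2 statements merged into one kernel-verified Lean document; each statement's English description precedes it below -/
import Mathlib

section
/- For a ∈ D let h_a(z) = (z − a)/(1 − conj(a)·z), a disk automorphism. Then for every integer n ≥ 1, sup_{z∈D} (1−|z|²)·|d/dz [(h_a(z))^n − z^n]| tends to 0 as a → 0 with a ∈ D. (This is the key estimate proving strong continuity of the composition groups on the little Bloch space, by density of polynomials.) -/
open Complex Filter Set

lemma abs_sub_le_abs_add_abs (x y : ℂ) : ‖x - y‖ ≤ ‖x‖ + ‖y‖ := by
  simpa using norm_sub_le x y

lemma abs_pow_sub_pow_le' {R : ℝ} (hR : 1 ≤ R) (m : ℕ) :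
    ∀ {x y : ℂ}, ‖x‖ ≤ R → ‖y‖ ≤ R →
      ‖x ^ m - y ^ m‖ ≤ m * R ^ m * ‖x - y‖ := by
  induction m with
  | zero => intro x y _ _; simp
  | succ m ih =>
    intro x y hx hy
    have key : x ^ (m + 1) - y ^ (m + 1) = x * (x ^ m - y ^ m) + (x - y) * y ^ m := by ring
    have h0 : (0:ℝ) ≤ ‖x - y‖ := norm_nonneg _
    have hR0 : (0:ℝ) ≤ R := zero_le_one.trans hR
    have hx0 : (0:ℝ) ≤ ‖x‖ := norm_nonneg _
    have hRy : ‖y‖ ^ m ≤ R ^ m := pow_le_pow_left₀ (norm_nonneg _) hy m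
    have hRm : R ^ m ≤ R ^ (m + 1) := pow_le_pow_right₀ hR (Nat.le_succ m)
    have hRm0 : (0:ℝ) ≤ R ^ m := pow_nonneg hR0 m
    have ihxy := ih hx hy
    have step1 : ‖x ^ (m + 1) - y ^ (m + 1)‖
        ≤ ‖x‖ * ‖x ^ m - y ^ m‖
          + ‖x - y‖ * ‖y‖ ^ m := by
      rw [key]
      refine (norm_add_le _ _).trans ?_
      simp [norm_mul, norm_pow]
    have step2 : ‖x‖ * ‖x ^ m - y ^ m‖
        ≤ R * (m * R ^ m * ‖x - y‖) := by
      apply mul_le_mul hx ihxy (norm_nonneg _) hR0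
    have step3 : ‖x - y‖ * ‖y‖ ^ m ≤ ‖x - y‖ * R ^ m := by
      gcongr
    have e1 : R * ((m:ℝ) * R ^ m * ‖x - y‖)
        = (m:ℝ) * R ^ (m+1) * ‖x - y‖ := by ring
    have e2 : ‖x - y‖ * R ^ m ≤ R ^ (m+1) * ‖x - y‖ := by
      rw [mul_comm]; exact mul_le_mul_of_nonneg_right hRm h0
    push_cast
    nlinarith [step1, step2, step3, e1, e2]

lemma key_bound (n : ℕ) {a z : ℂ} (ha : ‖a‖ ≤ 1/2) (hz : ‖z‖ < 1) :
    (1 - ‖z‖ ^ 2) * ‖deriv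
        (fun w : ℂ => ((w - a) / (1 - (starRingEnd ℂ) a * w)) ^ n - w ^ n) z‖
      ≤ ((n:ℝ) * (32 * n * 4 ^ n + 16)) * ‖a‖ := by
  have hzle : ‖z‖ ≤ 1 := hz.le
  have habsmul : ‖(starRingEnd ℂ) a * z‖ ≤ 1/2 := by
    rw [norm_mul, Complex.norm_conj]
    calc ‖a‖ * ‖z‖ ≤ (1/2) * 1 := by
          exact mul_le_mul ha hzle (norm_nonneg _) (by norm_num)
      _ = 1/2 := by norm_num
  have hden : 1/2 ≤ ‖1 - (starRingEnd ℂ) a * z‖ := by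
    have := norm_sub_norm_le (1:ℂ) ((starRingEnd ℂ) a * z)
    simp only [norm_one] at this
    linarith
  have hne : (1 : ℂ) - (starRingEnd ℂ) a * z ≠ 0 := by
    intro h
    rw [h] at hden; simp at hden; linarith
  -- derivative computation
  set c := (starRingEnd ℂ) a with hc
  set q : ℂ := (1 * (1 - c * z) - (z - a) * (-c)) / (1 - c * z) ^ 2 with hq
  have h1 : HasDerivAt (fun w : ℂ => w - a) 1 z := (hasDerivAt_id z).sub_const a
  have h2 : HasDerivAt (fun w : ℂ => 1 - c * w) (-c) z := by
    simpa using ((hasDerivAt_id z).const_mul c).const_sub 1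
  have hg : HasDerivAt (fun w : ℂ => (w - a) / (1 - c * w)) q z := h1.div h2 hne
  have hf : HasDerivAt (fun w : ℂ => ((w - a) / (1 - c * w)) ^ n - w ^ n)
      ((n : ℂ) * ((z - a) / (1 - c * z)) ^ (n - 1) * q - (n : ℂ) * z ^ (n - 1)) z :=
    (hg.pow n).sub (hasDerivAt_pow n z)
  rw [hf.deriv]
  set G : ℂ := (z - a) / (1 - c * z) with hG
  -- bounds
  have habsa : ‖c‖ = ‖a‖ := Complex.norm_conj a
  have hGle : ‖G‖ ≤ 4 := by
    rw [hG, norm_div]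
    have hnum : ‖z - a‖ ≤ 2 := by
      calc ‖z - a‖ ≤ ‖z‖ + ‖a‖ := abs_sub_le_abs_add_abs _ _
        _ ≤ 2 := by linarith
    calc ‖z - a‖ / ‖1 - c * z‖ ≤ 2 / (1/2) :=
          div_le_div₀ (by norm_num) hnum (by norm_num) hden
      _ = 4 := by norm_num
  have hGz : ‖G - z‖ ≤ 4 * ‖a‖ := by
    have heq : G - z = (c * z ^ 2 - a) / (1 - c * z) := by
      rw [hG, eq_div_iff hne, sub_mul, div_mul_cancel₀ _ hne]; ring
    rw [heq, norm_div]
    have hnum : ‖c * z ^ 2 - a‖ ≤ 2 * ‖a‖ := by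
      calc ‖c * z ^ 2 - a‖ ≤ ‖c * z ^ 2‖ + ‖a‖ :=
            abs_sub_le_abs_add_abs _ _
        _ ≤ 2 * ‖a‖ := by
            rw [norm_mul, norm_pow, habsa]
            have h2 : ‖z‖ ^ 2 ≤ 1 := pow_le_one₀ (norm_nonneg _) hzle
            nlinarith [norm_nonneg a]
    calc ‖c * z ^ 2 - a‖ / ‖1 - c * z‖
        ≤ (2 * ‖a‖) / (1/2) :=
          div_le_div₀ (by positivity) hnum (by norm_num) hden
      _ = 4 * ‖a‖ := by ring
  have hqle : ‖q‖ ≤ 8 := by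
    rw [hq, norm_div]
    have hnum : ‖1 * (1 - c * z) - (z - a) * (-c)‖ ≤ 2 := by
      have heq : 1 * (1 - c * z) - (z - a) * (-c) = 1 - c * a := by ring
      rw [heq]
      calc ‖1 - c * a‖ ≤ ‖(1:ℂ)‖ + ‖c * a‖ :=
            abs_sub_le_abs_add_abs _ _
        _ ≤ 2 := by
            rw [norm_one, norm_mul, habsa]
            nlinarith [norm_nonneg a]
    have hden2 : 1/4 ≤ ‖(1 - c * z) ^ 2‖ := by
      rw [norm_pow]
      nlinarith [hden]
    calc ‖1 * (1 - c * z) - (z - a) * (-c)‖ / ‖(1 - c * z) ^ 2‖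
        ≤ 2 / (1/4) := div_le_div₀ (by norm_num) hnum (by norm_num) hden2
      _ = 8 := by norm_num
  have hq1 : ‖q - 1‖ ≤ 16 * ‖a‖ := by
    have heq : q - 1 = (2 * (c * z) - c * a - c ^ 2 * z ^ 2) / (1 - c * z) ^ 2 := by
      rw [hq]; field_simp; ring
    rw [heq, norm_div]
    have hnum : ‖2 * (c * z) - c * a - c ^ 2 * z ^ 2‖ ≤ 4 * ‖a‖ := by
      calc ‖2 * (c * z) - c * a - c ^ 2 * z ^ 2‖
          ≤ ‖2 * (c * z) - c * a‖ + ‖c ^ 2 * z ^ 2‖ :=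
            abs_sub_le_abs_add_abs _ _
        _ ≤ (‖2 * (c * z)‖ + ‖c * a‖) + ‖c ^ 2 * z ^ 2‖ := by
            gcongr; exact abs_sub_le_abs_add_abs _ _
        _ ≤ 4 * ‖a‖ := by
            simp only [norm_mul, norm_pow, Complex.norm_ofNat, habsa]
            have hA : ‖a‖ ≤ 1 := ha.trans (by norm_num)
            have h2 : ‖z‖ ^ 2 ≤ 1 := pow_le_one₀ (norm_nonneg _) hzle
            have t1 : ‖a‖ * ‖z‖ ≤ ‖a‖ :=
              mul_le_of_le_one_right (norm_nonneg _) hzle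
            have t2 : ‖a‖ * ‖a‖ ≤ ‖a‖ :=
              mul_le_of_le_one_right (norm_nonneg _) hA
            have t3 : ‖a‖ ^ 2 * ‖z‖ ^ 2 ≤ ‖a‖ := by
              nlinarith [norm_nonneg a, sq_nonneg (‖a‖)]
            have e2 : ‖(2:ℂ)‖ = 2 := by norm_num
            nlinarith [norm_nonneg a, norm_nonneg z, e2]
    have hden2 : 1/4 ≤ ‖(1 - c * z) ^ 2‖ := by
      rw [norm_pow]; nlinarith [hden]
    calc ‖2 * (c * z) - c * a - c ^ 2 * z ^ 2‖ / ‖(1 - c * z) ^ 2‖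
        ≤ (4 * ‖a‖) / (1/4) :=
          div_le_div₀ (by positivity) hnum (by norm_num) hden2
      _ = 16 * ‖a‖ := by ring
  -- assemble
  have hsplit : (n : ℂ) * G ^ (n - 1) * q - (n : ℂ) * z ^ (n - 1)
      = (n : ℂ) * ((G ^ (n - 1) - z ^ (n - 1)) * q) + (n : ℂ) * (z ^ (n - 1) * (q - 1)) := by
    ring
  have hpow : ‖G ^ (n - 1) - z ^ (n - 1)‖
      ≤ (n - 1 : ℕ) * 4 ^ (n - 1) * ‖G - z‖ :=
    abs_pow_sub_pow_le' (by norm_num) (n - 1) hGle (by linarith)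
  have hzpow : ‖z‖ ^ (n - 1) ≤ 1 := pow_le_one₀ (norm_nonneg _) hzle
  have hD : ‖(n : ℂ) * G ^ (n - 1) * q - (n : ℂ) * z ^ (n - 1)‖
      ≤ (n : ℝ) * (32 * n * 4 ^ n + 16) * ‖a‖ := by
    rw [hsplit]
    have step1 : ‖(n : ℂ) * ((G ^ (n - 1) - z ^ (n - 1)) * q)
        + (n : ℂ) * (z ^ (n - 1) * (q - 1))‖
        ≤ (n : ℝ) * (‖G ^ (n - 1) - z ^ (n - 1)‖ * ‖q‖)
          + (n : ℝ) * (‖z‖ ^ (n - 1) * ‖q - 1‖) := by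
      refine (norm_add_le _ _).trans ?_
      simp [norm_mul, norm_pow, Complex.norm_natCast]
    refine step1.trans ?_
    have hb1 : ‖G ^ (n - 1) - z ^ (n - 1)‖ * ‖q‖
        ≤ ((n - 1 : ℕ) * 4 ^ (n - 1) * (4 * ‖a‖)) * 8 := by
      have := hpow.trans (by gcongr : ((n - 1 : ℕ) : ℝ) * 4 ^ (n - 1) * ‖G - z‖
        ≤ (n - 1 : ℕ) * 4 ^ (n - 1) * (4 * ‖a‖))
      exact mul_le_mul this hqle (norm_nonneg _) (by positivity)
    have hb2 : ‖z‖ ^ (n - 1) * ‖q - 1‖ ≤ 1 * (16 * ‖a‖) :=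
      mul_le_mul hzpow hq1 (norm_nonneg _) (by norm_num)
    have hn1 : ((n - 1 : ℕ) : ℝ) ≤ (n : ℝ) := by exact_mod_cast Nat.sub_le n 1
    have h4 : (4 : ℝ) ^ (n - 1) ≤ 4 ^ n := pow_le_pow_right₀ (by norm_num) (Nat.sub_le n 1)
    have ha0 : (0:ℝ) ≤ ‖a‖ := norm_nonneg a
    have hn0 : (0:ℝ) ≤ (n:ℝ) := Nat.cast_nonneg n
    have hM : ((n - 1 : ℕ) : ℝ) * 4 ^ (n - 1) ≤ (n:ℝ) * 4 ^ n :=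
      mul_le_mul hn1 h4 (by positivity) hn0
    have hmono := mul_le_mul_of_nonneg_right hM
      (by positivity : (0:ℝ) ≤ 4 * ‖a‖ * 8)
    calc (n : ℝ) * (‖G ^ (n - 1) - z ^ (n - 1)‖ * ‖q‖)
          + (n : ℝ) * (‖z‖ ^ (n - 1) * ‖q - 1‖)
        ≤ (n : ℝ) * (((n - 1 : ℕ) : ℝ) * 4 ^ (n - 1) * (4 * ‖a‖) * 8)
          + (n : ℝ) * (1 * (16 * ‖a‖)) :=
          add_le_add (mul_le_mul_of_nonneg_left hb1 hn0) (mul_le_mul_of_nonneg_left hb2 hn0)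
      _ ≤ (n : ℝ) * ((n:ℝ) * 4 ^ n * (4 * ‖a‖) * 8)
          + (n : ℝ) * (1 * (16 * ‖a‖)) := by
          have h6 := mul_le_mul_of_nonneg_left hmono hn0
          ring_nf at h6 ⊢
          linarith
      _ = (n : ℝ) * (32 * n * 4 ^ n + 16) * ‖a‖ := by ring
  calc (1 - ‖z‖ ^ 2) * ‖(n : ℂ) * G ^ (n - 1) * q - (n : ℂ) * z ^ (n - 1)‖
      ≤ 1 * ‖(n : ℂ) * G ^ (n - 1) * q - (n : ℂ) * z ^ (n - 1)‖ := by
        refine mul_le_mul_of_nonneg_right ?_ (norm_nonneg _)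
        nlinarith [norm_nonneg z]
    _ ≤ (n : ℝ) * (32 * n * 4 ^ n + 16) * ‖a‖ := by rw [one_mul]; exact hD

/-- For the disk automorphisms `h_a(z) = (z−a)/(1−conj(a)z)` and each `n ≥ 1`, the Bloch
seminorm of `h_a^n − z^n` tends to `0` as `a → 0` in the disk. -/
theorem bloch_seminorm_disc_automorphism_power_tendsto (n : ℕ) (hn : 1 ≤ n) :
    Filter.Tendsto
      (fun a : ℂ => ⨆ z : {z : ℂ // ‖z‖ < 1},
        ENNReal.ofReal ((1 - ‖z.1‖ ^ 2) *
          ‖deriv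
            (fun w : ℂ => ((w - a) / (1 - (starRingEnd ℂ) a * w)) ^ n - w ^ n) z.1‖))
      (nhdsWithin 0 {a : ℂ | ‖a‖ < 1}) (nhds 0) := by
  set C : ℝ := (n : ℝ) * (32 * n * 4 ^ n + 16) with hC
  have habs : Tendsto (fun a : ℂ => ‖a‖)
      (nhdsWithin 0 {a : ℂ | ‖a‖ < 1}) (nhds 0) := by
    have := (continuous_norm.tendsto 0).mono_left
      (nhdsWithin_le_nhds (s := {a : ℂ | ‖a‖ < 1}))
    simpa using this
  have hupper : Tendsto (fun a : ℂ => ENNReal.ofReal (C * ‖a‖))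
      (nhdsWithin 0 {a : ℂ | ‖a‖ < 1}) (nhds 0) := by
    have h1 : Tendsto (fun a : ℂ => C * ‖a‖)
        (nhdsWithin 0 {a : ℂ | ‖a‖ < 1}) (nhds 0) := by
      simpa using habs.const_mul C
    have := ENNReal.tendsto_ofReal h1
    simpa using this
  have hev : ∀ᶠ a in nhdsWithin 0 {a : ℂ | ‖a‖ < 1},
      (⨆ z : {z : ℂ // ‖z‖ < 1},
        ENNReal.ofReal ((1 - ‖z.1‖ ^ 2) *
          ‖deriv
            (fun w : ℂ => ((w - a) / (1 - (starRingEnd ℂ) a * w)) ^ n - w ^ n) z.1‖))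
        ≤ ENNReal.ofReal (C * ‖a‖) := by
    filter_upwards [habs.eventually (gt_mem_nhds (by norm_num : (0:ℝ) < 1/2))] with a ha
    refine iSup_le fun z => ?_
    refine ENNReal.ofReal_le_ofReal ?_
    have := key_bound n (a := a) (z := z.1) ha.le z.2
    rw [hC]
    exact this
  exact tendsto_of_tendsto_of_tendsto_of_le_of_le' tendsto_const_nhds hupper
    (Filter.Eventually.of_forall fun a => zero_le) hev
end

section
/- Let λ ∈ ℂ with Re(λ) > 0 and let h be analytic on the upper half-plane U with M := sup_{ω∈U} Im(ω)|h′(ω)| < ∞. Then for every ω ∈ U the integral f(ω) := ∫_0^∞ e^{−λt} h(e^t ω) dt converges absolutely, f is complex-differentiable on U, and λ·f(ω) − ω·f′(ω) = h(ω) for all ω ∈ U. (This is the resolvent formula R(λ,Γ)h(ω) = ω^λ ∫_ω^∞ z^{−λ−1} h(z) dz for the generator Γg(ω) = ωg′(ω) of the scaling composition group.) -/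
open Complex Filter Set MeasureTheory

namespace ResolventScalingAux

open Metric

noncomputable section

variable {lam : ℂ} {h : ℂ → ℂ} {M : ℝ} {ω : ℂ}

lemma hU : IsOpen {w : ℂ | 0 < w.im} := isOpen_lt continuous_const Complex.continuous_im

lemma im_ofReal_mul (r : ℝ) (ω : ℂ) : ((r : ℂ) * ω).im = r * ω.im := by
  simp [Complex.mul_im]

lemma im_exp_mul (s : ℝ) (ω : ℂ) : ((Real.exp s : ℂ) * ω).im = Real.exp s * ω.im :=
  im_ofReal_mul _ _

lemma mem_U (hω : 0 < ω.im) (s : ℝ) : ((Real.exp s : ℂ) * ω) ∈ {w : ℂ | 0 < w.im} := by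
  simp only [Set.mem_setOf_eq, im_exp_mul]
  exact mul_pos (Real.exp_pos s) hω

lemma M_nonneg (hM : ∀ ω ∈ {w : ℂ | 0 < w.im}, ω.im * ‖deriv h ω‖ ≤ M)
    (hω : 0 < ω.im) : 0 ≤ M :=
  le_trans (mul_nonneg hω.le (norm_nonneg _)) (hM ω hω)

lemma deriv_bound (hM : ∀ ω ∈ {w : ℂ | 0 < w.im}, ω.im * ‖deriv h ω‖ ≤ M)
    (hω : 0 < ω.im) (s : ℝ) :
    ‖deriv h ((Real.exp s : ℂ) * ω)‖ ≤ M / (Real.exp s * ω.im) := by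
  have h1 := hM _ (mem_U hω s)
  rw [im_exp_mul] at h1
  have hpos : 0 < Real.exp s * ω.im := mul_pos (Real.exp_pos s) hω
  rw [le_div_iff₀ hpos, mul_comm]
  exact h1

lemma hasDerivAt_ray (hh : DifferentiableOn ℂ h {w : ℂ | 0 < w.im}) (hω : 0 < ω.im) (t : ℝ) :
    HasDerivAt (fun s : ℝ => h ((Real.exp s : ℂ) * ω))
      (deriv h ((Real.exp t : ℂ) * ω) * ((Real.exp t : ℂ) * ω)) t := by
  have hd : HasDerivAt h (deriv h ((Real.exp t : ℂ) * ω)) ((Real.exp t : ℂ) * ω) :=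
    (hh.differentiableAt (hU.mem_nhds (mem_U hω t))).hasDerivAt
  have hin : HasDerivAt (fun s : ℝ => (Real.exp s : ℂ) * ω) ((Real.exp t : ℂ) * ω) t :=
    (Real.hasDerivAt_exp t).ofReal_comp.mul_const ω
  simpa [Function.comp_def] using hd.comp t hin

lemma norm_ray_deriv (hM : ∀ ω ∈ {w : ℂ | 0 < w.im}, ω.im * ‖deriv h ω‖ ≤ M)
    (hω : 0 < ω.im) (s : ℝ) :
    ‖deriv h ((Real.exp s : ℂ) * ω) * ((Real.exp s : ℂ) * ω)‖ ≤ M * ‖ω‖ / ω.im := by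
  have h1 := deriv_bound hM hω s
  have h2 : ‖deriv h ((Real.exp s : ℂ) * ω) * ((Real.exp s : ℂ) * ω)‖
      = ‖deriv h ((Real.exp s : ℂ) * ω)‖ * (Real.exp s * ‖ω‖) := by
    simp [map_mul, Complex.norm_real, abs_of_pos (Real.exp_pos s)]
  rw [h2]
  have hpos : 0 < Real.exp s * ω.im := mul_pos (Real.exp_pos s) hω
  calc ‖deriv h ((Real.exp s : ℂ) * ω)‖ * (Real.exp s * ‖ω‖)
      ≤ M / (Real.exp s * ω.im) * (Real.exp s * ‖ω‖) := by
        apply mul_le_mul_of_nonneg_right h1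
        positivity
    _ = M * ‖ω‖ / ω.im := by
        field_simp

lemma growth (hh : DifferentiableOn ℂ h {w : ℂ | 0 < w.im})
    (hM : ∀ ω ∈ {w : ℂ | 0 < w.im}, ω.im * ‖deriv h ω‖ ≤ M)
    (hω : 0 < ω.im) {t : ℝ} (ht : 0 ≤ t) :
    ‖h ((Real.exp t : ℂ) * ω)‖
      ≤ ‖h ω‖ + M * ‖ω‖ / ω.im * t := by
  have key := (convex_Ici (0:ℝ)).norm_image_sub_le_of_norm_hasDerivWithin_le
    (f := fun s : ℝ => h ((Real.exp s : ℂ) * ω))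
    (f' := fun s : ℝ => deriv h ((Real.exp s : ℂ) * ω) * ((Real.exp s : ℂ) * ω))
    (fun x _ => (hasDerivAt_ray hh hω x).hasDerivWithinAt)
    (fun x _ => norm_ray_deriv hM hω x) (self_mem_Ici) ht
  have h0 : ((Real.exp (0:ℝ) : ℂ) * ω) = ω := by norm_num
  have key : ‖h ((Real.exp t : ℂ) * ω) - h ((Real.exp (0:ℝ) : ℂ) * ω)‖
      ≤ M * ‖ω‖ / ω.im * ‖t - 0‖ := key
  rw [h0] at key
  have : ‖t - 0‖ = t := by rw [sub_zero, Real.norm_eq_abs, _root_.abs_of_nonneg ht]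
  rw [this] at key
  calc ‖h ((Real.exp t : ℂ) * ω)‖
      ≤ ‖h ω‖ + ‖h ((Real.exp t : ℂ) * ω) - h ω‖ := by
        have := norm_add_le (h ω) (h ((Real.exp t : ℂ) * ω) - h ω)
        simpa using this
    _ ≤ ‖h ω‖ + M * ‖ω‖ / ω.im * t := by
        exact add_le_add le_rfl key

lemma key_bound {a C D t : ℝ} (ha : 0 < a) (hC : 0 ≤ C) (hD : 0 ≤ D) (ht : 0 ≤ t) :
    Real.exp (-a * t) * (C + D * t) ≤ (C + 2 * D / a) * Real.exp (-(a / 2) * t) := by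
  have hE := Real.add_one_le_exp (a / 2 * t)
  have hE1 : 1 ≤ Real.exp (a / 2 * t) := Real.one_le_exp (by positivity)
  have h2 : t ≤ 2 / a * Real.exp (a / 2 * t) := by
    rw [div_mul_eq_mul_div, le_div_iff₀ ha]
    nlinarith
  have h1 : C + D * t ≤ (C + 2 * D / a) * Real.exp (a / 2 * t) := by
    have hDt : D * t ≤ D * (2 / a * Real.exp (a / 2 * t)) := mul_le_mul_of_nonneg_left h2 hD
    have hCE : C ≤ C * Real.exp (a / 2 * t) := le_mul_of_one_le_right hC hE1
    calc C + D * t ≤ C * Real.exp (a / 2 * t) + D * (2 / a * Real.exp (a / 2 * t)) := by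
          exact add_le_add hCE hDt
      _ = (C + 2 * D / a) * Real.exp (a / 2 * t) := by ring
  calc Real.exp (-a * t) * (C + D * t)
      ≤ Real.exp (-a * t) * ((C + 2 * D / a) * Real.exp (a / 2 * t)) :=
        mul_le_mul_of_nonneg_left h1 (Real.exp_pos _).le
    _ = (C + 2 * D / a) * (Real.exp (-a * t) * Real.exp (a / 2 * t)) := by ring
    _ = (C + 2 * D / a) * Real.exp (-(a / 2) * t) := by
        rw [← Real.exp_add]; ring_nf

lemma norm_cexp_neg (lam : ℂ) (t : ℝ) :
    ‖Complex.exp (-(lam * t))‖ = Real.exp (-lam.re * t) := by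
  rw [Complex.norm_exp]
  congr 1
  simp [Complex.mul_re]

lemma continuousAt_deriv (hh : DifferentiableOn ℂ h {w : ℂ | 0 < w.im}) {z : ℂ} (hz : 0 < z.im) :
    ContinuousAt (deriv h) z :=
  (((hh.analyticOnNhd hU).deriv) z hz).continuousAt

lemma cont_inner (ω : ℂ) : Continuous fun s : ℝ => (Real.exp s : ℂ) * ω :=
  (Complex.continuous_ofReal.comp Real.continuous_exp).mul continuous_const

lemma cont_cexp (lam : ℂ) : Continuous fun s : ℝ => Complex.exp (-(lam * s)) :=
  Complex.continuous_exp.comp (continuous_const.mul Complex.continuous_ofReal).neg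

lemma cont_F (hh : DifferentiableOn ℂ h {w : ℂ | 0 < w.im}) (hω : 0 < ω.im) :
    Continuous fun s : ℝ => Complex.exp (-(lam * s)) * h ((Real.exp s : ℂ) * ω) :=
  (cont_cexp lam).mul (continuous_iff_continuousAt.2 fun t => (hasDerivAt_ray hh hω t).continuousAt)

lemma cont_G (hh : DifferentiableOn ℂ h {w : ℂ | 0 < w.im}) (hω : 0 < ω.im) :
    Continuous fun s : ℝ =>
      Complex.exp (-(lam * s)) * ((Real.exp s : ℂ) * deriv h ((Real.exp s : ℂ) * ω)) := by
  refine (cont_cexp lam).mul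
    (Continuous.mul (Complex.continuous_ofReal.comp Real.continuous_exp) ?_)
  refine continuous_iff_continuousAt.2 fun t => ?_
  have : ContinuousAt ((deriv h) ∘ fun s : ℝ => (Real.exp s : ℂ) * ω) t :=
    ContinuousAt.comp (continuousAt_deriv hh (mem_U hω t)) (cont_inner ω).continuousAt
  exact this

lemma norm_F_le (hlam : 0 < lam.re) (hh : DifferentiableOn ℂ h {w : ℂ | 0 < w.im})
    (hM : ∀ ω ∈ {w : ℂ | 0 < w.im}, ω.im * ‖deriv h ω‖ ≤ M)
    (hω : 0 < ω.im) {t : ℝ} (ht : 0 ≤ t) :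
    ‖Complex.exp (-(lam * t)) * h ((Real.exp t : ℂ) * ω)‖
      ≤ (‖h ω‖ + 2 * (M * ‖ω‖ / ω.im) / lam.re)
          * Real.exp (-(lam.re / 2) * t) := by
  have hD : 0 ≤ M * ‖ω‖ / ω.im := by
    have hM0 := M_nonneg hM hω
    positivity
  calc ‖Complex.exp (-(lam * t)) * h ((Real.exp t : ℂ) * ω)‖
      = Real.exp (-lam.re * t) * ‖h ((Real.exp t : ℂ) * ω)‖ := by
        rw [norm_mul, norm_cexp_neg]
    _ ≤ Real.exp (-lam.re * t) * (‖h ω‖ + M * ‖ω‖ / ω.im * t) :=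
        mul_le_mul_of_nonneg_left (growth hh hM hω ht) (Real.exp_pos _).le
    _ ≤ (‖h ω‖ + 2 * (M * ‖ω‖ / ω.im) / lam.re)
          * Real.exp (-(lam.re / 2) * t) :=
        key_bound hlam (norm_nonneg _) hD ht

lemma integrable_F (hlam : 0 < lam.re) (hh : DifferentiableOn ℂ h {w : ℂ | 0 < w.im})
    (hM : ∀ ω ∈ {w : ℂ | 0 < w.im}, ω.im * ‖deriv h ω‖ ≤ M)
    (hω : 0 < ω.im) :
    IntegrableOn (fun s : ℝ => Complex.exp (-(lam * s)) * h ((Real.exp s : ℂ) * ω))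
      (Set.Ioi 0) volume := by
  refine Integrable.mono'
    (g := fun s => (‖h ω‖ + 2 * (M * ‖ω‖ / ω.im) / lam.re)
      * Real.exp (-(lam.re / 2) * s))
    ((exp_neg_integrableOn_Ioi 0 (by positivity)).const_mul _)
    (cont_F hh hω).aestronglyMeasurable.restrict ?_
  filter_upwards [ae_restrict_mem measurableSet_Ioi] with t ht
  exact norm_F_le hlam hh hM hω (le_of_lt ht)

lemma norm_G_le (hM : ∀ ω ∈ {w : ℂ | 0 < w.im}, ω.im * ‖deriv h ω‖ ≤ M)
    (hω : 0 < ω.im) (t : ℝ) :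
    ‖Complex.exp (-(lam * t)) * ((Real.exp t : ℂ) * deriv h ((Real.exp t : ℂ) * ω))‖
      ≤ M / ω.im * Real.exp (-lam.re * t) := by
  have h1 : ‖(Real.exp t : ℂ)‖ = Real.exp t := by
    rw [Complex.norm_real, Real.norm_eq_abs, _root_.abs_of_pos (Real.exp_pos t)]
  rw [norm_mul, norm_cexp_neg, norm_mul, h1]
  have h2 : ‖deriv h ((Real.exp t : ℂ) * ω)‖ ≤ M / (Real.exp t * ω.im) := deriv_bound hM hω t
  have h3 : Real.exp t * (M / (Real.exp t * ω.im)) = M / ω.im := by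
    field_simp
  calc Real.exp (-lam.re * t) * (Real.exp t * ‖deriv h ((Real.exp t : ℂ) * ω)‖)
      ≤ Real.exp (-lam.re * t) * (Real.exp t * (M / (Real.exp t * ω.im))) := by
        apply mul_le_mul_of_nonneg_left
          (mul_le_mul_of_nonneg_left h2 (Real.exp_pos t).le) (Real.exp_pos _).le
    _ = M / ω.im * Real.exp (-lam.re * t) := by rw [h3]; ring

lemma integrable_G (hlam : 0 < lam.re) (hh : DifferentiableOn ℂ h {w : ℂ | 0 < w.im})
    (hM : ∀ ω ∈ {w : ℂ | 0 < w.im}, ω.im * ‖deriv h ω‖ ≤ M)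
    (hω : 0 < ω.im) :
    IntegrableOn (fun s : ℝ =>
        Complex.exp (-(lam * s)) * ((Real.exp s : ℂ) * deriv h ((Real.exp s : ℂ) * ω)))
      (Set.Ioi 0) volume := by
  refine Integrable.mono' (g := fun s => M / ω.im * Real.exp (-lam.re * s))
    ((exp_neg_integrableOn_Ioi 0 hlam).const_mul _)
    (cont_G hh hω).aestronglyMeasurable.restrict ?_
  exact ae_of_all _ fun t => norm_G_le hM hω t

lemma hasDerivAt_integral (hlam : 0 < lam.re) (hh : DifferentiableOn ℂ h {w : ℂ | 0 < w.im})
    (hM : ∀ ω ∈ {w : ℂ | 0 < w.im}, ω.im * ‖deriv h ω‖ ≤ M)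
    (hω : 0 < ω.im) :
    HasDerivAt (fun w : ℂ => ∫ s in Set.Ioi (0 : ℝ),
        Complex.exp (-(lam * s)) * h ((Real.exp s : ℂ) * w))
      (∫ s in Set.Ioi (0 : ℝ),
        Complex.exp (-(lam * s)) * ((Real.exp s : ℂ) * deriv h ((Real.exp s : ℂ) * ω))) ω := by
  have hε : 0 < ω.im / 2 := by positivity
  have hM0 : 0 ≤ M := M_nonneg hM hω
  have himball : ∀ x ∈ ball ω (ω.im / 2), ω.im / 2 ≤ x.im := by
    intro x hx
    rw [mem_ball, Complex.dist_eq] at hx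
    have h1 : |x.im - ω.im| ≤ ‖x - ω‖ := by
      simpa [Complex.sub_im] using Complex.abs_im_le_norm (x - ω)
    have h2 := (abs_lt.1 (lt_of_le_of_lt h1 hx)).1
    linarith
  have main := hasDerivAt_integral_of_dominated_loc_of_deriv_le
    (μ := volume.restrict (Set.Ioi (0 : ℝ))) (x₀ := ω)
    (F := fun (w : ℂ) (s : ℝ) => Complex.exp (-(lam * s)) * h ((Real.exp s : ℂ) * w))
    (F' := fun (w : ℂ) (s : ℝ) =>
      Complex.exp (-(lam * s)) * ((Real.exp s : ℂ) * deriv h ((Real.exp s : ℂ) * w)))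
    (bound := fun s => 2 * M / ω.im * Real.exp (-lam.re * s)) (ball_mem_nhds ω hε)
    ?_ (integrable_F hlam hh hM hω) (cont_G hh hω).aestronglyMeasurable.restrict
    ?_ ((exp_neg_integrableOn_Ioi 0 hlam).const_mul _) ?_
  · exact main.2
  · filter_upwards [hU.mem_nhds hω] with x hx
    exact (cont_F hh hx).aestronglyMeasurable.restrict
  · refine ae_of_all _ fun s x hx => ?_
    have hxim : 0 < x.im := lt_of_lt_of_le hε (himball x hx)
    have := norm_G_le (lam := lam) (ω := x) hM hxim s
    refine this.trans ?_
    apply mul_le_mul_of_nonneg_right ?_ (Real.exp_pos _).le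
    have hle : M / x.im ≤ M / (ω.im / 2) :=
      div_le_div_of_nonneg_left hM0 hε (himball x hx)
    have heq : M / (ω.im / 2) = 2 * M / ω.im := by
      rw [div_div_eq_mul_div]; ring_nf
    linarith [hle, heq ▸ hle]
  · refine ae_of_all _ fun s x hx => ?_
    have hxim : 0 < x.im := lt_of_lt_of_le hε (himball x hx)
    have hz : ((Real.exp s : ℂ) * x) ∈ {w : ℂ | 0 < w.im} := mem_U hxim s
    have hd : HasDerivAt h (deriv h ((Real.exp s : ℂ) * x)) ((Real.exp s : ℂ) * x) :=
      (hh.differentiableAt (hU.mem_nhds hz)).hasDerivAt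
    have hin : HasDerivAt (fun w : ℂ => (Real.exp s : ℂ) * w) ((Real.exp s : ℂ)) x := by
      simpa using (hasDerivAt_id x).const_mul ((Real.exp s : ℂ))
    have hcomp := hd.comp x hin
    have heq : Complex.exp (-(lam * s)) * (deriv h ((Real.exp s : ℂ) * x) * (Real.exp s : ℂ))
        = Complex.exp (-(lam * s)) * ((Real.exp s : ℂ) * deriv h ((Real.exp s : ℂ) * x)) := by
      ring
    have := HasDerivAt.const_mul (Complex.exp (-(lam * s))) hcomp
    rw [heq] at this
    exact this

lemma hasDerivAt_cexp_neg (lam : ℂ) (t : ℝ) :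
    HasDerivAt (fun s : ℝ => Complex.exp (-(lam * s))) (-lam * Complex.exp (-(lam * t))) t := by
  have h1 : HasDerivAt (fun s : ℝ => -(lam * (s : ℂ))) (-lam) t := by
    exact ((((hasDerivAt_id t).ofReal_comp).const_mul lam).neg).congr_deriv (by simp)
  simpa [mul_comm] using h1.cexp

end

end ResolventScalingAux


open ResolventScalingAux in
/-- Resolvent formula for the generator of the scaling group, case `Re(λ) > 0`:
for `h` analytic on `U` with bounded Bloch seminorm, `f(ω) = ∫_0^∞ e^{−λt} h(e^t ω) dt`
converges absolutely, is complex-differentiable on `U`, and `λf(ω) − ωf′(ω) = h(ω)`. -/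
theorem resolvent_scaling_re_pos (lam : ℂ) (hlam : 0 < lam.re) (h : ℂ → ℂ)
    (hh : DifferentiableOn ℂ h {w : ℂ | 0 < w.im})
    (M : ℝ) (hM : ∀ ω ∈ {w : ℂ | 0 < w.im}, ω.im * ‖deriv h ω‖ ≤ M) :
    (∀ ω ∈ {w : ℂ | 0 < w.im},
        IntegrableOn (fun s : ℝ => Complex.exp (-(lam * s)) * h ((Real.exp s : ℂ) * ω))
          (Set.Ioi 0) volume) ∧
    (∀ ω ∈ {w : ℂ | 0 < w.im},
        DifferentiableAt ℂ
          (fun w : ℂ => ∫ s in Set.Ioi (0 : ℝ),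
            Complex.exp (-(lam * s)) * h ((Real.exp s : ℂ) * w)) ω) ∧
    (∀ ω ∈ {w : ℂ | 0 < w.im},
        lam * (∫ s in Set.Ioi (0 : ℝ), Complex.exp (-(lam * s)) * h ((Real.exp s : ℂ) * ω))
          - ω * deriv (fun w : ℂ => ∫ s in Set.Ioi (0 : ℝ),
              Complex.exp (-(lam * s)) * h ((Real.exp s : ℂ) * w)) ω
          = h ω) := by
  refine ⟨fun ω hω => integrable_F hlam hh hM hω,
    fun ω hω => (hasDerivAt_integral hlam hh hM hω).differentiableAt,
    fun ω hω => ?_⟩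
  have hω' : 0 < ω.im := hω
  have hderiv : deriv (fun w : ℂ => ∫ s in Set.Ioi (0 : ℝ),
        Complex.exp (-(lam * s)) * h ((Real.exp s : ℂ) * w)) ω
      = ∫ s in Set.Ioi (0 : ℝ),
          Complex.exp (-(lam * s)) * ((Real.exp s : ℂ) * deriv h ((Real.exp s : ℂ) * ω)) :=
    (hasDerivAt_integral hlam hh hM hω').deriv
  have hInt1 := integrable_F hlam hh hM hω'
  have hInt2 := integrable_G hlam hh hM hω'
  have hgderiv : ∀ t ∈ Set.Ici (0 : ℝ),
      HasDerivAt (fun t : ℝ => Complex.exp (-(lam * t)) * h ((Real.exp t : ℂ) * ω))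
        ((-lam) * (Complex.exp (-(lam * t)) * h ((Real.exp t : ℂ) * ω))
          + ω * (Complex.exp (-(lam * t)) * ((Real.exp t : ℂ) * deriv h ((Real.exp t : ℂ) * ω))))
        t := by
    intro t _
    have h1 := (hasDerivAt_cexp_neg lam t).mul (hasDerivAt_ray hh hω' t)
    refine h1.congr_deriv ?_
    ring
  have hg'int : IntegrableOn (fun t : ℝ =>
      (-lam) * (Complex.exp (-(lam * t)) * h ((Real.exp t : ℂ) * ω))
        + ω * (Complex.exp (-(lam * t)) * ((Real.exp t : ℂ) * deriv h ((Real.exp t : ℂ) * ω))))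
      (Set.Ioi 0) volume :=
    (hInt1.const_mul (-lam)).add (hInt2.const_mul ω)
  have htend : Tendsto (fun t : ℝ => Complex.exp (-(lam * t)) * h ((Real.exp t : ℂ) * ω))
      atTop (nhds 0) := by
    have hb : ∀ᶠ t : ℝ in atTop,
        ‖Complex.exp (-(lam * t)) * h ((Real.exp t : ℂ) * ω)‖
          ≤ (‖h ω‖ + 2 * (M * ‖ω‖ / ω.im) / lam.re)
              * Real.exp (-(lam.re / 2) * t) := by
      filter_upwards [eventually_ge_atTop (0 : ℝ)] with t ht
      exact norm_F_le hlam hh hM hω' ht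
    refine squeeze_zero_norm' hb ?_
    have h0 : Tendsto (fun t : ℝ => Real.exp (-(lam.re / 2 * t))) atTop (nhds 0) :=
      Real.tendsto_exp_neg_atTop_nhds_zero.comp
        (Filter.Tendsto.const_mul_atTop (by positivity) tendsto_id)
    have h1 := h0.const_mul
      (‖h ω‖ + 2 * (M * ‖ω‖ / ω.im) / lam.re)
    simpa [neg_mul, mul_zero] using h1
  have hFTC := integral_Ioi_of_hasDerivAt_of_tendsto' hgderiv hg'int htend
  have hg0 : Complex.exp (-(lam * ((0:ℝ) : ℂ))) * h ((Real.exp (0:ℝ) : ℂ) * ω) = h ω := by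
    simp [Real.exp_zero]
  rw [hg0] at hFTC
  have hsplit : (∫ t in Set.Ioi (0 : ℝ),
        ((-lam) * (Complex.exp (-(lam * t)) * h ((Real.exp t : ℂ) * ω))
          + ω * (Complex.exp (-(lam * t)) * ((Real.exp t : ℂ) * deriv h ((Real.exp t : ℂ) * ω)))))
      = (-lam) * (∫ t in Set.Ioi (0 : ℝ), Complex.exp (-(lam * t)) * h ((Real.exp t : ℂ) * ω))
        + ω * (∫ t in Set.Ioi (0 : ℝ),
            Complex.exp (-(lam * t)) * ((Real.exp t : ℂ) * deriv h ((Real.exp t : ℂ) * ω))) := by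
    rw [integral_add (hInt1.const_mul (-lam)) (hInt2.const_mul ω),
      integral_const_mul, integral_const_mul]
  rw [hsplit] at hFTC
  rw [hderiv]
  linear_combination -hFTC
end
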